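/- Let β > 0, ρ = Q/2 with Q = p+k, α > 0. There exists a constant C = C(α,β,τ,Q) > 0 such that for every nonnegative Radon measure μ on N, every n₀ ∈ N, every a > 0, every ω ∈ S^{2p−1}, ζ ∈ S^{k−1}, θ ∈ [0,2π): C · μ(B(n₀,a))/m(B(n₀,a)) ≤ c_β a^{2β} ∫_N (16a² + 8a‖X(n₀ s_a) − X₁‖² + d((X₁,Z₁)⁻¹ n₀ s_a)²)^{−ρ−β} dμ(X₁,Z₁), where s_a = (√(αa|cosθ|)ω, ¼αa|sinθ|ζ), c_β > 0 is a fixed constant, B(n,r) = {n₁ : d(n₁⁻¹n) < r}, and X(·) denotes the ℝ^{2p}-component. -/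

import Mathlib

open MeasureTheory
set_option maxHeartbeats 1000000

/-- Lower bound for the generalized Poisson integral `𝒬_{iβ}[μ]` along rays:
there is a constant `C = C(α,β,τ,Q) > 0` such that for every nonnegative Radon measure `μ`,
every `n₀`, `a > 0` and every ray parameter `(ω,ζ,θ)`,
`C μ(B(n₀,a))/m(B(n₀,a)) ≤ c_β a^{2β} ∫ (16a² + 8a‖X(n₀s_a) − X₁‖² + d((X₁,Z₁)⁻¹ n₀ s_a)²)^{−ρ−β} dμ`. -/
theorem stmt8 (p k : ℕ) (β ρ τ c_β : ℝ) (hβ : 0 < β) (hρ : ρ = (p + k : ℝ) / 2)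
    (hτ : 1 ≤ τ) (hc_β : 0 < c_β) (α : ℝ) (hα : 0 < α)
    (B : EuclideanSpace ℝ (Fin (2*p)) →ₗ[ℝ] EuclideanSpace ℝ (Fin (2*p)) →ₗ[ℝ]
      EuclideanSpace ℝ (Fin k))
    (hB_anti : ∀ X X', B X X' = - B X' X)
    (mul : EuclideanSpace ℝ (Fin (2*p)) × EuclideanSpace ℝ (Fin k) →
      EuclideanSpace ℝ (Fin (2*p)) × EuclideanSpace ℝ (Fin k) →
      EuclideanSpace ℝ (Fin (2*p)) × EuclideanSpace ℝ (Fin k))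
    (inv : EuclideanSpace ℝ (Fin (2*p)) × EuclideanSpace ℝ (Fin k) →
      EuclideanSpace ℝ (Fin (2*p)) × EuclideanSpace ℝ (Fin k))
    (d : EuclideanSpace ℝ (Fin (2*p)) × EuclideanSpace ℝ (Fin k) → ℝ)
    (hmul : ∀ n n', mul n n' = (n.1 + n'.1, n.2 + n'.2 + (1/2 : ℝ) • B n.1 n'.1))
    (hinv : ∀ n, inv n = (-n.1, -n.2))
    (hd : ∀ n, d n = Real.sqrt (‖n.1‖^4 + 16 * ‖n.2‖^2))
    (hquasi : ∀ n n', d (mul n n') ≤ τ * (d n + d n')) :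
    ∃ C : ℝ, 0 < C ∧
      ∀ (μ : Measure (EuclideanSpace ℝ (Fin (2*p)) × EuclideanSpace ℝ (Fin k))),
        ∀ n₀, ∀ a : ℝ, 0 < a →
        ∀ (ω : EuclideanSpace ℝ (Fin (2*p))), ‖ω‖ = 1 →
        ∀ (ζ : EuclideanSpace ℝ (Fin k)), ‖ζ‖ = 1 →
        ∀ θ ∈ Set.Ico 0 (2 * Real.pi),
        ENNReal.ofReal C *
            (μ {n₁ | d (mul (inv n₁) n₀) < a} / volume {n₁ | d (mul (inv n₁) n₀) < a})
          ≤ ENNReal.ofReal (c_β * a ^ (2 * β)) *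
            (∫⁻ n₁, ENNReal.ofReal
              ((16 * a^2
                + 8 * a * ‖(mul n₀ (Real.sqrt (α * a * |Real.cos θ|) • ω,
                    (1/4 * (α * a * |Real.sin θ|)) • ζ)).1 - n₁.1‖^2
                + d (mul (inv n₁) (mul n₀ (Real.sqrt (α * a * |Real.cos θ|) • ω,
                    (1/4 * (α * a * |Real.sin θ|)) • ζ))) ^ 2) ^ (-ρ - β)) ∂μ) := by
  classical
  have hd0 : ∀ n, 0 ≤ d n := fun n => by rw [hd]; exact Real.sqrt_nonneg _
  set K : ℝ := 16 + 8*(τ*(1+α)) + (τ*(1+α))^2 with hKdef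
  have hKpos : (0:ℝ) < K := by positivity
  set U1 : ENNReal := volume (Metric.ball (0 : EuclideanSpace ℝ (Fin (2*p))) 1) with hU1def
  set U2 : ENNReal := volume (Metric.ball (0 : EuclideanSpace ℝ (Fin k)) 1) with hU2def
  have hU1pos : 0 < U1 := Metric.measure_ball_pos _ _ one_pos
  have hU2pos : 0 < U2 := Metric.measure_ball_pos _ _ one_pos
  have hU1top : U1 ≠ ⊤ := measure_ball_lt_top.ne
  have hU2top : U2 ≠ ⊤ := measure_ball_lt_top.ne
  set u1 : ℝ := U1.toReal with hu1def
  set u2 : ℝ := U2.toReal with hu2def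
  have hu1 : 0 < u1 := ENNReal.toReal_pos hU1pos.ne' hU1top
  have hu2 : 0 < u2 := ENNReal.toReal_pos hU2pos.ne' hU2top
  have hKe : (0:ℝ) < K ^ (-ρ - β) := Real.rpow_pos_of_pos hKpos _
  refine ⟨c_β * K ^ (-ρ - β) * ((1:ℝ)/4^p) * ((1:ℝ)/8^k) * (u1 * u2), by positivity, ?_⟩
  intro μ n₀ a ha ω hω ζ hζ θ hθ
  set C : ℝ := c_β * K ^ (-ρ - β) * ((1:ℝ)/4^p) * ((1:ℝ)/8^k) * (u1 * u2) with hCdef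
  have hC : 0 < C := by positivity
  set s : EuclideanSpace ℝ (Fin (2*p)) × EuclideanSpace ℝ (Fin k) := (Real.sqrt (α * a * |Real.cos θ|) • ω,
      (1/4 * (α * a * |Real.sin θ|)) • ζ) with hsdef
  set m : EuclideanSpace ℝ (Fin (2*p)) × EuclideanSpace ℝ (Fin k) := mul n₀ s with hmdef
  set Bset : Set (EuclideanSpace ℝ (Fin (2*p)) × EuclideanSpace ℝ (Fin k)) := {n₁ | d (mul (inv n₁) n₀) < a} with hBsetdef
  -- associativity
  have hassoc : ∀ x y z : EuclideanSpace ℝ (Fin (2*p)) × EuclideanSpace ℝ (Fin k), mul (mul x y) z = mul x (mul y z) := by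
    intro x y z
    simp only [hmul, Prod.mk.injEq]
    constructor
    · abel
    · simp only [map_add, LinearMap.add_apply, smul_add]
      abel
  -- d of s
  have hds : d s = α * a := by
    have hc1 : (0:ℝ) ≤ α * a * |Real.cos θ| := by positivity
    have hc2 : (0:ℝ) ≤ 1/4 * (α * a * |Real.sin θ|) := by positivity
    rw [hd]
    have h1 : ‖s.1‖ = Real.sqrt (α * a * |Real.cos θ|) := by
      show ‖Real.sqrt (α * a * |Real.cos θ|) • ω‖ = _
      rw [norm_smul, hω, mul_one, Real.norm_eq_abs, abs_of_nonneg (Real.sqrt_nonneg _)]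
    have h2 : ‖s.2‖ = 1/4 * (α * a * |Real.sin θ|) := by
      show ‖(1/4 * (α * a * |Real.sin θ|)) • ζ‖ = _
      rw [norm_smul, hζ, mul_one, Real.norm_eq_abs, abs_of_nonneg hc2]
    rw [h1, h2]
    have h3 : Real.sqrt (α * a * |Real.cos θ|) ^ 4 + 16 * (1/4 * (α * a * |Real.sin θ|))^2
        = (α * a)^2 := by
      have h4 : Real.sqrt (α * a * |Real.cos θ|) ^ 4
          = (α * a * |Real.cos θ|) ^ 2 := by
        rw [show Real.sqrt (α * a * |Real.cos θ|) ^ 4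
            = (Real.sqrt (α * a * |Real.cos θ|) ^ 2) ^ 2 by ring, Real.sq_sqrt hc1]
      rw [h4]
      have h5 := Real.sin_sq_add_cos_sq θ
      have h6 : |Real.cos θ|^2 = Real.cos θ ^ 2 := sq_abs _
      have h7 : |Real.sin θ|^2 = Real.sin θ ^ 2 := sq_abs _
      nlinarith
    rw [h3, Real.sqrt_sq (by positivity)]
  -- key upper bound for points of Bset
  have key : ∀ n₁ ∈ Bset,
      16 * a^2 + 8 * a * ‖m.1 - n₁.1‖^2 + d (mul (inv n₁) m) ^ 2 ≤ K * a^2 := by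
    intro n₁ hn₁
    have hDdef : mul (inv n₁) m = mul (mul (inv n₁) n₀) s := by
      rw [hmdef, ← hassoc]
    set D := d (mul (inv n₁) m) with hD
    have hD0 : 0 ≤ D := hd0 _
    have hDle : D ≤ τ * (1 + α) * a := by
      rw [hD, hDdef]
      calc d (mul (mul (inv n₁) n₀) s) ≤ τ * (d (mul (inv n₁) n₀) + d s) := hquasi _ _
        _ ≤ τ * (a + α * a) := by
            have h1 : d (mul (inv n₁) n₀) ≤ a := le_of_lt hn₁
            have hτ0 : (0:ℝ) ≤ τ := by linarith
            nlinarith [hds]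
        _ = τ * (1 + α) * a := by ring
    have hX : ‖m.1 - n₁.1‖^2 ≤ D := by
      have h1 : (mul (inv n₁) m).1 = m.1 - n₁.1 := by
        rw [hmul, hinv]; simp; abel
      have h2 : D = Real.sqrt (‖m.1 - n₁.1‖^4 + 16 * ‖(mul (inv n₁) m).2‖^2) := by
        rw [hD, hd, h1]
      rw [h2]
      have h3 : ‖m.1 - n₁.1‖^2 = Real.sqrt (‖m.1 - n₁.1‖^4) := by
        rw [show ‖m.1 - n₁.1‖^4 = (‖m.1 - n₁.1‖^2)^2 by ring, Real.sqrt_sq (sq_nonneg _)]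
      rw [h3]
      exact Real.sqrt_le_sqrt (le_add_of_nonneg_right (by positivity))
    have hTa : (0:ℝ) ≤ τ * (1 + α) * a := by nlinarith
    nlinarith [sq_nonneg D, sq_nonneg (τ * (1+α) * a - D)]
  -- measurability of Bset
  have hcont : Continuous fun n₁ : EuclideanSpace ℝ (Fin (2*p)) × EuclideanSpace ℝ (Fin k) => d (mul (inv n₁) n₀) := by
    have heq : (fun n₁ : EuclideanSpace ℝ (Fin (2*p)) × EuclideanSpace ℝ (Fin k) => d (mul (inv n₁) n₀)) = fun n₁ : EuclideanSpace ℝ (Fin (2*p)) × EuclideanSpace ℝ (Fin k) =>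
        Real.sqrt (‖-n₁.1 + n₀.1‖^4 + 16 * ‖-n₁.2 + n₀.2 + (1/2:ℝ) • B.flip n₀.1 (-n₁.1)‖^2) := by
      funext n₁
      rw [hmul, hinv, hd]
      simp [LinearMap.flip_apply]
    rw [heq]
    have hB1 : Continuous fun n₁ : EuclideanSpace ℝ (Fin (2*p)) × EuclideanSpace ℝ (Fin k) => (B.flip n₀.1) (-n₁.1) :=
      (B.flip n₀.1).continuous_of_finiteDimensional.comp continuous_fst.neg
    exact Real.continuous_sqrt.comp
      (by fun_prop)
  have hmeasB : MeasurableSet Bset :=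
    measurableSet_lt (hcont.measurable) measurable_const
  -- volume lower bound
  set r1 : ℝ := Real.sqrt a / 2 with hr1def
  set r2 : ℝ := a / 8 with hr2def
  have hr1 : 0 < r1 := by
    rw [hr1def]; positivity
  have hr1' : 0 < Real.sqrt a := Real.sqrt_pos.mpr ha
  have hr2 : 0 < r2 := by rw [hr2def]; linarith
  have hvol : ENNReal.ofReal (r1 ^ (2*p) * r2 ^ k) * (U1 * U2) ≤ volume Bset := by
    have hprod : volume Bset = ∫⁻ x, volume (Prod.mk x ⁻¹' Bset) := by
      rw [Measure.volume_eq_prod _ _, Measure.prod_apply hmeasB]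
    rw [hprod]
    have hsec : ∀ x ∈ Metric.ball n₀.1 r1,
        Metric.ball (n₀.2 + (1/2:ℝ) • B (-x) n₀.1) r2 ⊆ Prod.mk x ⁻¹' Bset := by
      intro x hx z hz
      simp only [Set.mem_preimage, hBsetdef, Set.mem_setOf_eq]
      rw [hmul, hinv, hd]
      simp only
      have hx1 : ‖-x + n₀.1‖ < r1 := by
        rw [Metric.mem_ball, dist_eq_norm] at hx
        rw [show -x + n₀.1 = -(x - n₀.1) by abel, norm_neg]
        exact hx
      have hz1 : ‖-z + n₀.2 + (1/2:ℝ) • B (-x) n₀.1‖ < r2 := by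
        rw [Metric.mem_ball, dist_eq_norm] at hz
        rw [show -z + n₀.2 + (1/2:ℝ) • B (-x) n₀.1
          = -(z - (n₀.2 + (1/2:ℝ) • B (-x) n₀.1)) by abel, norm_neg]
        exact hz
      rw [Real.sqrt_lt' ha]
      have hs2 : Real.sqrt a ^ 2 = a := Real.sq_sqrt ha.le
      have h1 : ‖-x + n₀.1‖^4 < a^2/16 := by
        have h2 : ‖-x + n₀.1‖^4 < r1^4 :=
          pow_lt_pow_left₀ hx1 (norm_nonneg _) (by norm_num)
        have h3 : r1^4 = a^2/16 := by
          rw [hr1def, div_pow, show (4:ℕ)=2*2 from rfl, pow_mul, Real.sq_sqrt ha.le]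
          norm_num
        linarith
      have h4 : 16 * ‖-z + n₀.2 + (1/2:ℝ) • B (-x) n₀.1‖^2 < a^2/4 := by
        have hn : 0 ≤ ‖-z + n₀.2 + (1/2:ℝ) • B (-x) n₀.1‖ := norm_nonneg _
        rw [hr2def] at hz1
        nlinarith
      nlinarith
    calc ENNReal.ofReal (r1 ^ (2*p) * r2 ^ k) * (U1 * U2)
        = ∫⁻ x, (Metric.ball n₀.1 r1).indicator
            (fun _ => ENNReal.ofReal (r2 ^ k) * U2) x := by
          rw [lintegral_indicator measurableSet_ball _, setLIntegral_const,
            Measure.addHaar_ball_of_pos volume n₀.1 hr1, finrank_euclideanSpace_fin,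
            ENNReal.ofReal_mul (by positivity)]
          ring
      _ ≤ ∫⁻ x, volume (Prod.mk x ⁻¹' Bset) := by
          apply lintegral_mono
          intro x
          by_cases hx : x ∈ Metric.ball n₀.1 r1
          · rw [Set.indicator_of_mem hx]
            calc ENNReal.ofReal (r2 ^ k) * U2
                = volume (Metric.ball (n₀.2 + (1/2:ℝ) • B (-x) n₀.1) r2) := by
                  rw [Measure.addHaar_ball_of_pos volume _ hr2, finrank_euclideanSpace_fin]
              _ ≤ volume (Prod.mk x ⁻¹' Bset) := measure_mono (hsec x hx)
          · rw [Set.indicator_of_notMem hx]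
            exact zero_le
  -- the μ-integral lower bound
  set c2 : ℝ := (K * a^2) ^ (-ρ - β) with hc2def
  have hc2pos : 0 < c2 := Real.rpow_pos_of_pos (by positivity) _
  have hint : ENNReal.ofReal c2 * μ Bset ≤
      ∫⁻ n₁, ENNReal.ofReal
        ((16 * a^2 + 8 * a * ‖m.1 - n₁.1‖^2 + d (mul (inv n₁) m) ^ 2) ^ (-ρ - β)) ∂μ := by
    calc ENNReal.ofReal c2 * μ Bset
        = ∫⁻ n₁, Bset.indicator (fun _ => ENNReal.ofReal c2) n₁ ∂μ := by
          rw [lintegral_indicator hmeasB _, setLIntegral_const]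
      _ ≤ _ := by
          apply lintegral_mono
          intro n₁
          by_cases hn₁ : n₁ ∈ Bset
          · rw [Set.indicator_of_mem hn₁]
            apply ENNReal.ofReal_le_ofReal
            rw [hc2def]
            apply Real.rpow_le_rpow_of_nonpos
            · positivity
            · exact key n₁ hn₁
            · have : (0:ℝ) ≤ ρ := by rw [hρ]; positivity
              linarith
          · rw [Set.indicator_of_notMem hn₁]
            exact zero_le
  -- arithmetic for the constant
  have hVpos : (0:ℝ) < r1 ^ (2*p) * r2 ^ k * (u1 * u2) := by positivity
  have hmain : C * (r1 ^ (2*p) * r2 ^ k * (u1 * u2))⁻¹ = c_β * a ^ (2*β) * c2 := by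
    have h1 : r1 ^ (2*p) = a^p / 4^p := by
      rw [hr1def, div_pow, pow_mul, Real.sq_sqrt ha.le]
      norm_num [pow_mul]
    have h2 : r2 ^ k = a^k / 8^k := by rw [hr2def, div_pow]
    have h3 : c2 = K ^ (-ρ - β) * (a ^ (p+k : ℕ) * a ^ (2*β))⁻¹ := by
      rw [hc2def, Real.mul_rpow hKpos.le (by positivity)]
      congr 1
      rw [← Real.rpow_natCast a 2, ← Real.rpow_mul ha.le, ← Real.rpow_natCast a (p+k),
        ← Real.rpow_add ha, ← Real.rpow_neg ha.le]
      congr 1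
      push_cast
      rw [hρ]
      ring
    rw [hCdef, h1, h2, h3]
    have hapk : (0:ℝ) < a ^ (p+k:ℕ) := by positivity
    have ha2β : (0:ℝ) < a ^ (2*β) := Real.rpow_pos_of_pos ha _
    have h4p : (0:ℝ) < (4:ℝ)^p := by positivity
    have h8k : (0:ℝ) < (8:ℝ)^k := by positivity
    have hap : (0:ℝ) < a ^ p := by positivity
    have hak : (0:ℝ) < a ^ k := by positivity
    field_simp
    rw [pow_add]
  -- final chain
  calc ENNReal.ofReal C * (μ Bset / volume Bset)
      ≤ ENNReal.ofReal C * (μ Bset / ENNReal.ofReal (r1 ^ (2*p) * r2 ^ k * (u1 * u2))) := by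
        gcongr
        have hU1eq : ENNReal.ofReal u1 = U1 := by rw [hu1def]; exact ENNReal.ofReal_toReal hU1top
        have hU2eq : ENNReal.ofReal u2 = U2 := by rw [hu2def]; exact ENNReal.ofReal_toReal hU2top
        calc ENNReal.ofReal (r1 ^ (2*p) * r2 ^ k * (u1 * u2))
            = ENNReal.ofReal (r1 ^ (2*p) * r2 ^ k) * (ENNReal.ofReal u1 * ENNReal.ofReal u2) := by
              rw [ENNReal.ofReal_mul (by positivity), ENNReal.ofReal_mul hu1.le]
          _ = ENNReal.ofReal (r1 ^ (2*p) * r2 ^ k) * (U1 * U2) := by rw [hU1eq, hU2eq]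
          _ ≤ volume Bset := hvol
    _ = ENNReal.ofReal (C * (r1 ^ (2*p) * r2 ^ k * (u1 * u2))⁻¹) * μ Bset := by
        rw [ENNReal.ofReal_mul hC.le, ENNReal.ofReal_inv_of_pos hVpos, div_eq_mul_inv]
        ring
    _ = ENNReal.ofReal (c_β * a ^ (2*β) * c2) * μ Bset := by rw [hmain]
    _ = ENNReal.ofReal (c_β * a ^ (2*β)) * (ENNReal.ofReal c2 * μ Bset) := by
        rw [ENNReal.ofReal_mul (by positivity), mul_assoc]
    _ ≤ _ := by
        apply mul_le_mul_right hint
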